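/- Let K ⊆ ℝ^{n_λ} be a nonempty closed convex set, d : ℝ^{n_λ} → ℝ differentiable and m-strongly convex (m > 0), b > a > 0 constants, and F : ℝ^{n_x} × ℝ^{n_u} × ℝ^{n_λ} → ℝ^{n_λ} any function. Then for all (x, u, λ): λ ∈ SOL(K, F(x, u, λ)) if and only if there exists η ∈ ℝ^{n_λ} such that F(x, u, λ) − η = 0 and φ^{ab}(λ, η) ≤ 0. -/

import Mathlib

open scoped RealInnerProductSpace

/-- Auchmuty's function `L^c(λ, η, ω) = c·d(λ) − c·d(ω) + ⟨η − c·∇d(λ), λ − ω⟩`. -/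
noncomputable def Auchmuty {n : ℕ} (c : ℝ) (d : EuclideanSpace ℝ (Fin n) → ℝ)
    (lam eta om : EuclideanSpace ℝ (Fin n)) : ℝ :=
  c * d lam - c * d om + ⟪eta - c • gradient d lam, lam - om⟫

/-- The generalized primal gap function `φ^c(λ, η) = sup_{ω ∈ K} L^c(λ, η, ω)`. -/
noncomputable def primalGap {n : ℕ} (K : Set (EuclideanSpace ℝ (Fin n))) (c : ℝ)
    (d : EuclideanSpace ℝ (Fin n) → ℝ) (lam eta : EuclideanSpace ℝ (Fin n)) : ℝ :=
  sSup (Auchmuty c d lam eta '' K)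

/-- The generalized D-gap function `φ^{ab}(λ, η) = φ^a(λ, η) − φ^b(λ, η)`. -/
noncomputable def Dgap {n : ℕ} (K : Set (EuclideanSpace ℝ (Fin n))) (a b : ℝ)
    (d : EuclideanSpace ℝ (Fin n) → ℝ) (lam eta : EuclideanSpace ℝ (Fin n)) : ℝ :=
  primalGap K a d lam eta - primalGap K b d lam eta

lemma auch_rw {n : ℕ} (c : ℝ) (d : EuclideanSpace ℝ (Fin n) → ℝ)
    (lam eta om : EuclideanSpace ℝ (Fin n)) :
    Auchmuty c d lam eta om =
      ⟪eta, lam - om⟫ + c * (d lam - d om + ⟪gradient d lam, om - lam⟫) := by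
  simp only [Auchmuty, inner_sub_left, inner_sub_right, real_inner_smul_left]
  ring

section aux
variable {n : ℕ} {K : Set (EuclideanSpace ℝ (Fin n))}
  {d : EuclideanSpace ℝ (Fin n) → ℝ} {m : ℝ}

lemma breg_le (hstrong : ∀ x y : EuclideanSpace ℝ (Fin n),
      d x + ⟪gradient d x, y - x⟫ + m / 2 * ‖y - x‖ ^ 2 ≤ d y)
    (lam om : EuclideanSpace ℝ (Fin n)) :
    d lam - d om + ⟪gradient d lam, om - lam⟫ ≤ - (m / 2 * ‖lam - om‖ ^ 2) := by
  have := hstrong lam om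
  rw [norm_sub_rev]
  linarith

lemma auch_le (hm : 0 < m)
    (hstrong : ∀ x y : EuclideanSpace ℝ (Fin n),
      d x + ⟪gradient d x, y - x⟫ + m / 2 * ‖y - x‖ ^ 2 ≤ d y)
    {c : ℝ} (hc : 0 < c) (lam eta om : EuclideanSpace ℝ (Fin n)) :
    Auchmuty c d lam eta om ≤ ‖eta‖ * ‖lam - om‖ - c * (m / 2 * ‖lam - om‖ ^ 2) := by
  rw [auch_rw]
  have h1 := breg_le hstrong lam om
  have h2 : ⟪eta, lam - om⟫ ≤ ‖eta‖ * ‖lam - om‖ := real_inner_le_norm _ _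
  nlinarith

lemma auch_bdd (hm : 0 < m)
    (hstrong : ∀ x y : EuclideanSpace ℝ (Fin n),
      d x + ⟪gradient d x, y - x⟫ + m / 2 * ‖y - x‖ ^ 2 ≤ d y)
    {c : ℝ} (hc : 0 < c) (lam eta : EuclideanSpace ℝ (Fin n)) :
    BddAbove (Auchmuty c d lam eta '' K) := by
  refine ⟨‖eta‖ ^ 2 / (2 * c * m), ?_⟩
  rintro - ⟨om, -, rfl⟩
  refine (auch_le hm hstrong hc lam eta om).trans ?_
  rw [le_div_iff₀ (by positivity)]
  nlinarith [sq_nonneg (c * m * ‖lam - om‖ - ‖eta‖), norm_nonneg (lam - om), norm_nonneg eta]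

lemma auch_self (c : ℝ) (lam eta : EuclideanSpace ℝ (Fin n)) :
    Auchmuty c d lam eta lam = 0 := by
  rw [auch_rw]; simp

end aux

/-- D-gap-constraint-based reformulation of the equilibrium constraint
`λ ∈ SOL(K, F(x, u, λ))` for a nonempty closed convex `K`. -/
theorem stmt5 {nl nx nu : ℕ} (hnl : 0 < nl)
    (K : Set (EuclideanSpace ℝ (Fin nl)))
    (hK : K.Nonempty) (hKclosed : IsClosed K) (hKconvex : Convex ℝ K)
    (d : EuclideanSpace ℝ (Fin nl) → ℝ) (m : ℝ) (hm : 0 < m)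
    (hddiff : Differentiable ℝ d)
    (hstrong : ∀ x y : EuclideanSpace ℝ (Fin nl),
      d x + ⟪gradient d x, y - x⟫ + m / 2 * ‖y - x‖ ^ 2 ≤ d y)
    (a b : ℝ) (ha : 0 < a) (hab : a < b)
    (F : EuclideanSpace ℝ (Fin nx) → EuclideanSpace ℝ (Fin nu) →
      EuclideanSpace ℝ (Fin nl) → EuclideanSpace ℝ (Fin nl)) :
    ∀ (x : EuclideanSpace ℝ (Fin nx)) (u : EuclideanSpace ℝ (Fin nu))
      (lam : EuclideanSpace ℝ (Fin nl)),
      (lam ∈ K ∧ ∀ om ∈ K, 0 ≤ ⟪om - lam, F x u lam⟫) ↔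
      (∃ eta : EuclideanSpace ℝ (Fin nl), F x u lam - eta = 0 ∧
        Dgap K a b d lam eta ≤ 0) := by
  intro x u lam
  have hb : (0:ℝ) < b := ha.trans hab
  constructor
  · rintro ⟨hlamK, hVI⟩
    set eta := F x u lam with heta
    refine ⟨eta, sub_self _, ?_⟩
    have hφa : primalGap K a d lam eta ≤ 0 := by
      apply Real.sSup_le _ le_rfl
      rintro - ⟨om, homK, rfl⟩
      rw [auch_rw]
      have h1 := breg_le hstrong lam om
      have h2 : ⟪eta, lam - om⟫ ≤ 0 := by
        have hvi := hVI om homK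
        have he : ⟪eta, lam - om⟫ = -⟪om - lam, eta⟫ := by
          rw [real_inner_comm, show lam - om = -(om - lam) by abel, inner_neg_left]
        rw [he]
        linarith
      have ha1 := mul_le_mul_of_nonneg_left h1 ha.le
      have ha2 : 0 ≤ a * (m / 2 * ‖lam - om‖ ^ 2) := by positivity
      linarith
    have hφb : 0 ≤ primalGap K b d lam eta := by
      have hmem : Auchmuty b d lam eta lam ∈ Auchmuty b d lam eta '' K :=
        Set.mem_image_of_mem _ hlamK
      calc (0:ℝ) = Auchmuty b d lam eta lam := (auch_self b lam eta).symm
        _ ≤ _ := le_csSup (auch_bdd hm hstrong hb lam eta) hmem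
    simp only [Dgap]; linarith
  · rintro ⟨eta, hFeta, hgap⟩
    have heta : eta = F x u lam := (sub_eq_zero.mp hFeta).symm
    subst heta
    set eta := F x u lam with heta
    rw [Dgap, sub_nonpos] at hgap
    have hba : (0:ℝ) < b - a := by linarith
    set C : ℝ := (b - a) * (m / 2) with hC
    have hCpos : 0 < C := by rw [hC]; positivity
    have key : ∀ om ∈ K, Auchmuty b d lam eta om + C * ‖lam - om‖ ^ 2 ≤
        primalGap K b d lam eta := by
      intro om homK
      have h1 : Auchmuty a d lam eta om = Auchmuty b d lam eta om
          + (a - b) * (d lam - d om + ⟪gradient d lam, om - lam⟫) := by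
        rw [auch_rw, auch_rw]; ring
      have h2 := breg_le hstrong lam om
      have h3 : Auchmuty a d lam eta om ≤ primalGap K a d lam eta :=
        le_csSup (auch_bdd hm hstrong ha lam eta) (Set.mem_image_of_mem _ homK)
      have h4 : Auchmuty b d lam eta om + C * ‖lam - om‖ ^ 2
          ≤ Auchmuty a d lam eta om := by
        rw [h1, hC]; nlinarith
      linarith
    have near : ∀ ε : ℝ, 0 < ε → ∃ om ∈ K, C * ‖lam - om‖ ^ 2 < ε ∧
        primalGap K b d lam eta - ε < Auchmuty b d lam eta om := by
      intro ε hε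
      have hne : (Auchmuty b d lam eta '' K).Nonempty := hK.image _
      obtain ⟨-, ⟨om, homK, rfl⟩, hlt⟩ :=
        exists_lt_of_lt_csSup hne (by linarith : primalGap K b d lam eta - ε
          < primalGap K b d lam eta)
      exact ⟨om, homK, by linarith [key om homK], hlt⟩
    have hlamK : lam ∈ K := by
      rw [← hKclosed.closure_eq, Metric.mem_closure_iff]
      intro ε hε
      obtain ⟨om, homK, hdist, -⟩ := near (C * ε ^ 2) (by positivity)
      refine ⟨om, homK, ?_⟩
      rw [dist_eq_norm]
      have h2 : ‖lam - om‖ ^ 2 < ε ^ 2 := lt_of_mul_lt_mul_left hdist hCpos.le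
      nlinarith [norm_nonneg (lam - om)]
    have hφb_le : primalGap K b d lam eta ≤ 0 := by
      have hbound : ∀ ε : ℝ, 0 < ε → primalGap K b d lam eta
          ≤ ‖eta‖ * Real.sqrt (ε / C) + ε := by
        intro ε hε
        obtain ⟨om, homK, hdist, hlt⟩ := near ε hε
        have h1 : ‖lam - om‖ ≤ Real.sqrt (ε / C) := by
          rw [show ‖lam - om‖ = Real.sqrt (‖lam - om‖ ^ 2) by
            rw [Real.sqrt_sq (norm_nonneg _)]]
          apply Real.sqrt_le_sqrt
          rw [le_div_iff₀ hCpos]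
          nlinarith
        have h2 := auch_le hm hstrong hb lam eta om
        have h3 : Auchmuty b d lam eta om ≤ ‖eta‖ * Real.sqrt (ε / C) := by
          have h4 := mul_le_mul_of_nonneg_left h1 (norm_nonneg eta)
          have h5 : 0 ≤ b * (m / 2 * ‖lam - om‖ ^ 2) := by positivity
          linarith
        linarith
      have htend : Filter.Tendsto (fun ε : ℝ => ‖eta‖ * Real.sqrt (ε / C) + ε)
          (nhdsWithin 0 (Set.Ioi 0)) (nhds 0) := by
        have hc : Filter.Tendsto (fun ε : ℝ => ‖eta‖ * Real.sqrt (ε / C) + ε)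
            (nhds 0) (nhds (‖eta‖ * Real.sqrt (0 / C) + 0)) :=
          (((Real.continuous_sqrt.comp (continuous_id.div_const C)).tendsto
            0).const_mul _).add (continuous_id.tendsto 0)
        simpa using hc.mono_left nhdsWithin_le_nhds
      refine ge_of_tendsto htend ?_
      filter_upwards [self_mem_nhdsWithin] with ε hε
      exact hbound ε hε
    have hA : ∀ om ∈ K, Auchmuty b d lam eta om ≤ 0 := fun om homK =>
      (le_csSup (auch_bdd hm hstrong hb lam eta)
        (Set.mem_image_of_mem _ homK)).trans hφb_le
    refine ⟨hlamK, ?_⟩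
    intro om homK
    set v := om - lam with hv
    set ψ : ℝ → ℝ := fun t => d (lam + t • v) with hψ
    set G : ℝ := ⟪gradient d lam, v⟫ with hG
    have hγ : ∀ t : ℝ, HasDerivAt (fun s : ℝ => lam + s • v) v t := by
      intro t
      simpa using ((hasDerivAt_id t).smul_const v).const_add lam
    have hψd : HasDerivAt ψ G 0 := by
      have hf := (hddiff lam).hasGradientAt.hasFDerivAt
      have hf' : HasFDerivAt d
          ((InnerProductSpace.toDual ℝ (EuclideanSpace ℝ (Fin nl))) (gradient d lam))
          ((fun s : ℝ => lam + s • v) 0) := by simpa using hf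
      have hcomp := hf'.comp_hasDerivAt 0 (hγ 0)
      simpa [hψ, hG, Function.comp_def] using hcomp
    have hslope : Filter.Tendsto (slope ψ 0) (nhdsWithin 0 (Set.Ioi 0)) (nhds G) :=
      (hasDerivAt_iff_tendsto_slope.mp hψd).mono_left
        (nhdsWithin_mono 0 (fun t ht => ne_of_gt ht))
    have htend2 : Filter.Tendsto (fun t => b * (slope ψ 0 t - G))
        (nhdsWithin 0 (Set.Ioi 0)) (nhds 0) := by
      have := (hslope.sub_const G).const_mul b
      simpa using this
    have hkey : ⟪eta, lam - om⟫ ≤ 0 := by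
      refine ge_of_tendsto htend2 ?_
      filter_upwards [Ioc_mem_nhdsGT (by norm_num : (0:ℝ) < 1)] with t ht
      obtain ⟨ht0, ht1⟩ := ht
      have homt : lam + t • v ∈ K := by
        have hmem := hKconvex hlamK homK (by linarith : (0:ℝ) ≤ 1 - t) ht0.le
          (by ring : (1 - t) + t = 1)
        have : (1 - t) • lam + t • om = lam + t • v := by
          rw [hv, smul_sub, sub_smul, one_smul]; abel
        rwa [this] at hmem
      have hA_t := hA _ homt
      rw [auch_rw] at hA_t
      have e1 : ⟪eta, lam - (lam + t • v)⟫ = -(t * ⟪eta, v⟫) := by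
        rw [show lam - (lam + t • v) = -(t • v) by abel, inner_neg_right,
          real_inner_smul_right]
      have e2 : ⟪gradient d lam, lam + t • v - lam⟫ = t * G := by
        rw [show lam + t • v - lam = t • v by abel, real_inner_smul_right, hG]
      have e3 : ⟪eta, lam - om⟫ = -⟪eta, v⟫ := by
        rw [hv, show lam - om = -(om - lam) by abel, inner_neg_right]
      rw [e1, e2] at hA_t
      have hst2 : slope ψ 0 t * t = d (lam + t • v) - d lam := by
        have ht' : ψ t = d (lam + t • v) := rfl
        have h0' : ψ 0 = d lam := by simp [hψ]
        rw [slope_def_field, ht', h0']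
        field_simp
        ring
      rw [e3]
      have hmul : t * (-⟪eta, v⟫) ≤ t * (b * (slope ψ 0 t - G)) := by
        calc t * (-⟪eta, v⟫)
            ≤ b * (d (lam + t • v) - d lam) - b * (t * G) := by linarith [hA_t]
          _ = t * (b * (slope ψ 0 t - G)) := by rw [← hst2]; ring
      exact le_of_mul_le_mul_left hmul ht0
    have e4 : ⟪eta, lam - om⟫ = -⟪v, eta⟫ := by
      rw [show lam - om = -v by rw [hv]; abel, inner_neg_right, real_inner_comm]
    linarith [hkey, e4]
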